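/- Fix real numbers x₀, y₀, z₀ and define affine maps g_T, g_M, g_B into ℝ⁴ by g_T(x_T, y_T) = (3, x₀ + x_T, y₀ + y_T, z₀), g_M(x_M, z_M) = (2, x₀ + x_M, y₀, z₀ + z_M), and g_B(y_B, z_B) = (1, x₀, y₀ + y_B, z₀ + z_B). Then the map (ℝ × ℝ) × (ℝ × ℝ) × (ℝ × ℝ) → ℝ⁴ × ℝ⁴ sending ((x_T,y_T),(x_M,z_M),(y_B,z_B)) to ( ‖g_T(x_T,y_T) − g_M(x_M,z_M)‖⁻¹ • (g_T(x_T,y_T) − g_M(x_M,z_M)), ‖g_M(x_M,z_M) − g_B(y_B,z_B)‖⁻¹ • (g_M(x_M,z_M) − g_B(y_B,z_B)) ) is injective. -/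

import Mathlib

/-- The point of `ℝ⁴ = EuclideanSpace ℝ (Fin 4)` with coordinates `a, b, c, d`
at the indices `0, 1, 2, 3`. -/
noncomputable def pt (a b c d : ℝ) : EuclideanSpace ℝ (Fin 4) :=
  (WithLp.equiv 2 (Fin 4 → ℝ)).symm ![a, b, c, d]

/-- The standard affine local form of the top sheet around a triple point. -/
noncomputable def gT (x₀ y₀ z₀ : ℝ) (xT yT : ℝ) : EuclideanSpace ℝ (Fin 4) :=
  pt 3 (x₀ + xT) (y₀ + yT) z₀

/-- The standard affine local form of the middle sheet around a triple point. -/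
noncomputable def gM (x₀ y₀ z₀ : ℝ) (xM zM : ℝ) : EuclideanSpace ℝ (Fin 4) :=
  pt 2 (x₀ + xM) y₀ (z₀ + zM)

/-- The standard affine local form of the bottom sheet around a triple point. -/
noncomputable def gB (x₀ y₀ z₀ : ℝ) (yB zB : ℝ) : EuclideanSpace ℝ (Fin 4) :=
  pt 1 x₀ (y₀ + yB) (z₀ + zB)


lemma pt_apply (a b c d : ℝ) (i : Fin 4) : pt a b c d i = ![a, b, c, d] i := rfl

lemma unit_eq {u v : EuclideanSpace ℝ (Fin 4)} (hu : u 0 = 1) (hv : v 0 = 1)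
    (h : ‖u‖⁻¹ • u = ‖v‖⁻¹ • v) : u = v := by
  have hu0 : u ≠ 0 := fun h0 => by simp [h0] at hu
  have hv0 : v ≠ 0 := fun h0 => by simp [h0] at hv
  have hnu : (0:ℝ) < ‖u‖ := norm_pos_iff.mpr hu0
  have hnv : (0:ℝ) < ‖v‖ := norm_pos_iff.mpr hv0
  have h0 := congrFun (congrArg (fun w : EuclideanSpace ℝ (Fin 4) => (w : Fin 4 → ℝ)) h) 0
  simp only [PiLp.smul_apply, smul_eq_mul, hu, hv, mul_one] at h0
  have hn : ‖u‖ = ‖v‖ := by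
    field_simp at h0; linarith
  rw [hn] at h
  exact smul_right_injective _ (inv_ne_zero hnv.ne') h

/-- the restriction `L′` of the Gauss-type map to the standard affine local
sheets `D_T² × D_M² × D_B²` around a triple point of the projection is injective. -/
theorem gauss_map_local_restriction_injective (x₀ y₀ z₀ : ℝ) :
    Function.Injective (fun p : (ℝ × ℝ) × (ℝ × ℝ) × (ℝ × ℝ) =>
      ((‖gT x₀ y₀ z₀ p.1.1 p.1.2 - gM x₀ y₀ z₀ p.2.1.1 p.2.1.2‖⁻¹ •
          (gT x₀ y₀ z₀ p.1.1 p.1.2 - gM x₀ y₀ z₀ p.2.1.1 p.2.1.2),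
        ‖gM x₀ y₀ z₀ p.2.1.1 p.2.1.2 - gB x₀ y₀ z₀ p.2.2.1 p.2.2.2‖⁻¹ •
          (gM x₀ y₀ z₀ p.2.1.1 p.2.1.2 - gB x₀ y₀ z₀ p.2.2.1 p.2.2.2)) :
        EuclideanSpace ℝ (Fin 4) × EuclideanSpace ℝ (Fin 4))) := by
  intro p q h
  obtain ⟨⟨xT, yT⟩, ⟨xM, zM⟩, ⟨yB, zB⟩⟩ := p
  obtain ⟨⟨xT', yT'⟩, ⟨xM', zM'⟩, ⟨yB', zB'⟩⟩ := q
  simp only [Prod.mk.injEq] at h ⊢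
  obtain ⟨h1, h2⟩ := h
  have c1 : ∀ xT yT xM zM : ℝ,
      (gT x₀ y₀ z₀ xT yT - gM x₀ y₀ z₀ xM zM : EuclideanSpace ℝ (Fin 4)) 0 = 1 := by
    intro xT yT xM zM
    simp [gT, gM, PiLp.sub_apply, pt_apply]; norm_num
  have c2 : ∀ xM zM yB zB : ℝ,
      (gM x₀ y₀ z₀ xM zM - gB x₀ y₀ z₀ yB zB : EuclideanSpace ℝ (Fin 4)) 0 = 1 := by
    intro xM zM yB zB
    simp [gM, gB, PiLp.sub_apply, pt_apply]; norm_num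
  have e1 := unit_eq (c1 xT yT xM zM) (c1 xT' yT' xM' zM') h1
  have e2 := unit_eq (c2 xM zM yB zB) (c2 xM' zM' yB' zB') h2
  have f1 : ∀ i : Fin 4,
      (gT x₀ y₀ z₀ xT yT - gM x₀ y₀ z₀ xM zM : EuclideanSpace ℝ (Fin 4)) i =
      (gT x₀ y₀ z₀ xT' yT' - gM x₀ y₀ z₀ xM' zM' : EuclideanSpace ℝ (Fin 4)) i :=
    fun i => congrFun (congrArg (fun w : EuclideanSpace ℝ (Fin 4) => (w : Fin 4 → ℝ)) e1) i
  have f2 : ∀ i : Fin 4,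
      (gM x₀ y₀ z₀ xM zM - gB x₀ y₀ z₀ yB zB : EuclideanSpace ℝ (Fin 4)) i =
      (gM x₀ y₀ z₀ xM' zM' - gB x₀ y₀ z₀ yB' zB' : EuclideanSpace ℝ (Fin 4)) i :=
    fun i => congrFun (congrArg (fun w : EuclideanSpace ℝ (Fin 4) => (w : Fin 4 → ℝ)) e2) i
  have a1 := f1 1; have a2 := f1 2; have a3 := f1 3
  have b1 := f2 1; have b2 := f2 2; have b3 := f2 3
  simp only [gT, gM, gB, PiLp.sub_apply, pt_apply] at a1 a2 a3 b1 b2 b3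
  have i2 : ∀ a b c d : ℝ, (![a, b, c, d] : Fin 4 → ℝ) 2 = c := fun _ _ _ _ => rfl
  have i3 : ∀ a b c d : ℝ, (![a, b, c, d] : Fin 4 → ℝ) 3 = d := fun _ _ _ _ => rfl
  norm_num [Matrix.cons_val_one, Matrix.head_cons, i2, i3] at a1 a2 a3 b1 b2 b3
  refine ⟨⟨?_, ?_⟩, ⟨?_, ?_⟩, ?_, ?_⟩ <;> linarith
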